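/- Assume the density ratio model (G_0, …, G_m Borel probability measures on ℝ; q : ℝ → ℝ^d Borel measurable; θ_0 = 0, θ_1, …, θ_m ∈ ℝ^d; G_k with density exp(θ_kᵀ q(·)) with respect to G_0; ρ_0, …, ρ_m > 0, Σ ρ_k = 1; h = Σ_k ρ_k exp(θ_kᵀ q), h_k = ρ_k exp(θ_kᵀ q)/h; Ḡ = Σ_k ρ_k G_k; ∫ ‖q‖² dḠ < ∞). Define a_{rs}(x) = ∫_{(−∞,x]} (δ_{rs} h_r − h_r h_s) dḠ, let B_r(x) ∈ ℝ^{md} have sth block ∫_{(−∞,x]} (δ_{rs} h_r − h_r h_s) q dḠ (1 ≤ s ≤ m), and let W be the md × md block matrix with blocks W_{rs} = ∫ (δ_{rs} h_r − h_r h_s) q qᵀ dḠ (1 ≤ r, s ≤ m), assumed invertible. Then for every N ≥ 1, all indices r_1, …, r_N ∈ {0, …, m} and all reals x_1, …, x_N, the N × N matrix M with entries M_{ij} = (ρ_{r_i} ρ_{r_j})^{-1} [ a_{r_i r_j}(min{x_i, x_j}) − B_{r_i}(x_i)ᵀ W^{-1} B_{r_j}(x_j) ] is positive semidefinite. -/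

import Mathlib

open MeasureTheory

section Aux

open Finset

lemma drm_cov_sq_le {n : ℕ} (w f : Fin n → ℝ) (hw : ∀ k, 0 ≤ w k)
    (hsum : ∑ k, w k = 1) :
    (∑ k, w k * f k) ^ 2 ≤ ∑ k, w k * f k ^ 2 := by
  have h := Finset.sum_mul_sq_le_sq_mul_sq Finset.univ (fun k => Real.sqrt (w k))
    (fun k => Real.sqrt (w k) * f k)
  have e1 : ∀ k : Fin n, Real.sqrt (w k) * (Real.sqrt (w k) * f k) = w k * f k := by
    intro k; rw [← mul_assoc, Real.mul_self_sqrt (hw k)]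
  have e2 : ∀ k : Fin n, Real.sqrt (w k) ^ 2 = w k := fun k => Real.sq_sqrt (hw k)
  have e3 : ∀ k : Fin n, (Real.sqrt (w k) * f k) ^ 2 = w k * f k ^ 2 := by
    intro k; rw [mul_pow, e2]
  calc (∑ k, w k * f k) ^ 2 = (∑ k, Real.sqrt (w k) * (Real.sqrt (w k) * f k)) ^ 2 := by
        rw [Finset.sum_congr rfl fun k _ => (e1 k).symm]
    _ ≤ (∑ k, Real.sqrt (w k) ^ 2) * ∑ k, (Real.sqrt (w k) * f k) ^ 2 := h
    _ = (∑ k, w k) * ∑ k, w k * f k ^ 2 := by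
        rw [Finset.sum_congr rfl fun k _ => e2 k, Finset.sum_congr rfl fun k _ => e3 k]
    _ = ∑ k, w k * f k ^ 2 := by rw [hsum, one_mul]

lemma drm_quad_nonneg {P : Type*} [Fintype P] {n : ℕ} (w : Fin n → ℝ)
    (hw : ∀ k, 0 ≤ w k) (hsum : ∑ k, w k = 1)
    (idx : P → Fin n) (coef : P → ℝ) :
    0 ≤ ∑ p : P, ∑ p' : P, coef p * coef p' *
      ((if idx p = idx p' then w (idx p) else 0) - w (idx p) * w (idx p')) := by
  set F : Fin n → ℝ := fun k => ∑ p : P, if idx p = k then coef p else 0 with hF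
  have hdelta : ∀ p p' : P, (if idx p = idx p' then w (idx p) else 0)
      = ∑ k, (if idx p = k then 1 else 0) * (if idx p' = k then 1 else 0) * w k := by
    intro p p'
    rw [Finset.sum_eq_single (idx p)]
    · by_cases h : idx p = idx p' <;> simp [h, eq_comm]
    · intro k _ hk; simp [Ne.symm hk]
    · simp
  have hwcoef : ∀ p : P, coef p * w (idx p)
      = ∑ k, (if idx p = k then coef p else 0) * w k := by
    intro p
    rw [Finset.sum_eq_single (idx p)]
    · simp
    · intro k _ hk; simp [Ne.symm hk]
    · simp
  have key : ∑ p : P, ∑ p' : P, coef p * coef p' *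
      ((if idx p = idx p' then w (idx p) else 0) - w (idx p) * w (idx p'))
      = ∑ k, w k * F k ^ 2 - (∑ k, w k * F k) ^ 2 := by
    have split : ∀ p p' : P, coef p * coef p' *
        ((if idx p = idx p' then w (idx p) else 0) - w (idx p) * w (idx p'))
        = coef p * coef p' * (if idx p = idx p' then w (idx p) else 0)
          - (coef p * w (idx p)) * (coef p' * w (idx p')) := by
      intro p p'; ring
    rw [Finset.sum_congr rfl fun p _ => Finset.sum_congr rfl fun p' _ => split p p']
    rw [Finset.sum_congr rfl fun p _ => Finset.sum_sub_distrib _ _, Finset.sum_sub_distrib]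
    congr 1
    · have h1 : ∀ p p' : P, coef p * coef p' * (if idx p = idx p' then w (idx p) else 0)
          = ∑ k, (if idx p = k then coef p else 0) * (if idx p' = k then coef p' else 0) * w k := by
        intro p p'
        rw [hdelta p p', Finset.mul_sum]
        refine Finset.sum_congr rfl fun k _ => ?_
        by_cases hh1 : idx p = k <;> by_cases hh2 : idx p' = k <;> simp [hh1, hh2]
      rw [Finset.sum_congr rfl fun p _ => Finset.sum_congr rfl fun p' _ => h1 p p']
      rw [Finset.sum_congr rfl fun p (_ : p ∈ univ) => Finset.sum_comm]
      rw [Finset.sum_comm]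
      refine Finset.sum_congr rfl fun k _ => ?_
      have hFk : F k * F k = ∑ p : P, ∑ p' : P,
          (if idx p = k then coef p else 0) * (if idx p' = k then coef p' else 0) := by
        rw [hF]; exact Finset.sum_mul_sum _ _ _ _
      rw [sq, hFk, Finset.mul_sum]
      refine Finset.sum_congr rfl fun p _ => ?_
      rw [Finset.mul_sum]
      exact Finset.sum_congr rfl fun p' _ => by ring
    · have h2 : (∑ p : P, coef p * w (idx p)) = ∑ k, w k * F k := by
        rw [Finset.sum_congr rfl fun p (_ : p ∈ univ) => hwcoef p, Finset.sum_comm]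
        refine Finset.sum_congr rfl fun k _ => ?_
        rw [hF, Finset.mul_sum]
        exact Finset.sum_congr rfl fun p _ => by ring
      rw [← h2, sq, Finset.sum_mul_sum]
  rw [key, sub_nonneg]
  exact drm_cov_sq_le w F hw hsum

end Aux

set_option maxHeartbeats 2000000 in
theorem drm_efficiency_matrix_posSemidef (m d : ℕ) (hm : 1 ≤ m) (hd : 1 ≤ d)
    (G : Fin (m + 1) → Measure ℝ) [∀ k, IsProbabilityMeasure (G k)]
    (q : ℝ → Fin d → ℝ) (hq : Measurable q)
    (θ : Fin (m + 1) → Fin d → ℝ) (hθ0 : θ 0 = 0)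
    (hG : ∀ k, G k =
      (G 0).withDensity fun t => ENNReal.ofReal (Real.exp (∑ i, θ k i * q t i)))
    (ρ : Fin (m + 1) → ℝ) (hρpos : ∀ k, 0 < ρ k) (hρsum : ∑ k, ρ k = 1)
    (hfun : Fin (m + 1) → ℝ → ℝ)
    (hhfun : ∀ k t, hfun k t =
      ρ k * Real.exp (∑ i, θ k i * q t i) /
        ∑ k', ρ k' * Real.exp (∑ i, θ k' i * q t i))
    (Gbar : Measure ℝ) (hGbar : Gbar = ∑ k, ENNReal.ofReal (ρ k) • G k)
    (hq2int : Integrable (fun t => ∑ i, (q t i) ^ 2) Gbar)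
    (a : Fin (m + 1) → Fin (m + 1) → ℝ → ℝ)
    (ha : ∀ (r s : Fin (m + 1)) (x : ℝ), a r s x =
      ∫ t in Set.Iic x, ((if r = s then hfun r t else 0) - hfun r t * hfun s t) ∂Gbar)
    (B : Fin (m + 1) → ℝ → Fin m × Fin d → ℝ)
    (hB : ∀ (r : Fin (m + 1)) (x : ℝ) (s : Fin m) (i : Fin d), B r x (s, i) =
      ∫ t in Set.Iic x,
        ((if r = s.succ then hfun r t else 0) - hfun r t * hfun s.succ t) * q t i ∂Gbar)
    (W : Matrix (Fin m × Fin d) (Fin m × Fin d) ℝ)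
    (hW : ∀ (r s : Fin m) (i j : Fin d), W (r, i) (s, j) =
      ∫ t, ((if r = s then hfun r.succ t else 0) - hfun r.succ t * hfun s.succ t) *
        (q t i * q t j) ∂Gbar)
    (hWinv : IsUnit W.det)
    (N : ℕ) (hN : 1 ≤ N) (r : Fin N → Fin (m + 1)) (x : Fin N → ℝ) :
    Matrix.PosSemidef (Matrix.of fun i j : Fin N =>
      (ρ (r i) * ρ (r j))⁻¹ *
        (a (r i) (r j) (min (x i) (x j)) -
          ∑ c : Fin m × Fin d, B (r i) (x i) c * (W⁻¹).mulVec (B (r j) (x j)) c)) := by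
  -- finite measure
  haveI hGbarFin : IsFiniteMeasure Gbar := by
    refine ⟨?_⟩
    rw [hGbar, Measure.finset_sum_apply]
    simp only [Measure.smul_apply, smul_eq_mul, measure_univ, mul_one]
    exact ENNReal.sum_lt_top.mpr fun k _ => ENNReal.ofReal_lt_top
  -- basic facts about hfun
  have hden_pos : ∀ t : ℝ, 0 < ∑ k', ρ k' * Real.exp (∑ i, θ k' i * q t i) := fun t =>
    Finset.sum_pos (fun k _ => mul_pos (hρpos k) (Real.exp_pos _)) Finset.univ_nonempty
  have hfun_nonneg : ∀ k t, 0 ≤ hfun k t := by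
    intro k t; rw [hhfun k t]
    exact div_nonneg (le_of_lt (mul_pos (hρpos k) (Real.exp_pos _))) (le_of_lt (hden_pos t))
  have hfun_le_one : ∀ k t, hfun k t ≤ 1 := by
    intro k t; rw [hhfun k t, div_le_one (hden_pos t)]
    exact Finset.single_le_sum (f := fun k' => ρ k' * Real.exp (∑ i, θ k' i * q t i))
      (fun k' _ => le_of_lt (mul_pos (hρpos k') (Real.exp_pos _))) (Finset.mem_univ k)
  have hfun_sum : ∀ t, ∑ k, hfun k t = 1 := by
    intro t
    rw [Finset.sum_congr rfl fun k _ => hhfun k t, ← Finset.sum_div,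
      div_self (ne_of_gt (hden_pos t))]
  -- measurability
  have hqi : ∀ i, Measurable fun t => q t i := fun i => (measurable_pi_apply i).comp hq
  have hexp_meas : ∀ k, Measurable fun t => Real.exp (∑ i, θ k i * q t i) := fun k =>
    Real.measurable_exp.comp (Finset.measurable_sum _ fun i _ => (hqi i).const_mul _)
  have hden_meas : Measurable fun t => ∑ k', ρ k' * Real.exp (∑ i, θ k' i * q t i) :=
    Finset.measurable_sum _ fun k _ => (hexp_meas k).const_mul _
  have hfun_meas : ∀ k, Measurable (hfun k) := by
    intro k
    have : hfun k = fun t => ρ k * Real.exp (∑ i, θ k i * q t i) /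
        ∑ k', ρ k' * Real.exp (∑ i, θ k' i * q t i) := funext fun t => hhfun k t
    rw [this]
    exact ((hexp_meas k).const_mul _).div hden_meas
  -- facts about the kernel
  have hc_meas : ∀ k l, Measurable fun t =>
      (if k = l then hfun k t else 0) - hfun k t * hfun l t := by
    intro k l
    refine Measurable.sub ?_ ((hfun_meas k).mul (hfun_meas l))
    by_cases h : k = l
    · simp only [h, if_true]; exact hfun_meas l
    · simp only [h, if_false]; exact measurable_const
  have hc_bdd : ∀ k l t, |(if k = l then hfun k t else 0) - hfun k t * hfun l t| ≤ 1 := by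
    intro k l t
    have h1 := hfun_nonneg k t; have h2 := hfun_le_one k t
    have h3 := hfun_nonneg l t; have h4 := hfun_le_one l t
    by_cases h : k = l <;> simp only [h, if_true, if_false] <;> rw [abs_le] <;>
      constructor <;> nlinarith
  have hc_symm : ∀ k l t,
      (if k = l then hfun k t else 0) - hfun k t * hfun l t
      = (if l = k then hfun l t else 0) - hfun l t * hfun k t := by
    intro k l t
    by_cases h : k = l
    · subst h; ring_nf
    · simp [h, Ne.symm h, mul_comm]
  -- integrability helpers
  have hint_bdd : ∀ (f : ℝ → ℝ), Measurable f → (∀ t, |f t| ≤ 1) → Integrable f Gbar := by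
    intro f hf hb
    exact ⟨hf.aestronglyMeasurable,
      HasFiniteIntegral.of_bounded (C := 1) (Filter.Eventually.of_forall fun t => hb t)⟩
  have hint_q : ∀ (f : ℝ → ℝ) (i : Fin d), Measurable f → (∀ t, |f t| ≤ 1) →
      Integrable (fun t => f t * q t i) Gbar := by
    intro f i hf hb
    refine Integrable.mono' ((integrable_const (1 : ℝ)).add hq2int)
      ((hf.mul (hqi i)).aestronglyMeasurable) (Filter.Eventually.of_forall fun t => ?_)
    have h1 : |q t i| ≤ 1 + q t i ^ 2 := by nlinarith [sq_nonneg (|q t i| - 1), sq_abs (q t i)]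
    have h2 : q t i ^ 2 ≤ ∑ j, q t j ^ 2 :=
      Finset.single_le_sum (f := fun j => q t j ^ 2) (fun j _ => sq_nonneg _) (Finset.mem_univ i)
    have : ‖f t * q t i‖ = |f t| * |q t i| := abs_mul _ _
    rw [this]
    calc |f t| * |q t i| ≤ 1 * (1 + q t i ^ 2) :=
          mul_le_mul (hb t) h1 (abs_nonneg _) zero_le_one
      _ ≤ 1 + ∑ j, q t j ^ 2 := by rw [one_mul]; linarith
  have hint_qq : ∀ (f : ℝ → ℝ) (i j : Fin d), Measurable f → (∀ t, |f t| ≤ 1) →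
      Integrable (fun t => f t * (q t i * q t j)) Gbar := by
    intro f i j hf hb
    refine Integrable.mono' hq2int
      ((hf.mul ((hqi i).mul (hqi j))).aestronglyMeasurable)
      (Filter.Eventually.of_forall fun t => ?_)
    have hi : q t i ^ 2 ≤ ∑ l, q t l ^ 2 :=
      Finset.single_le_sum (f := fun l => q t l ^ 2) (fun l _ => sq_nonneg _) (Finset.mem_univ i)
    have hj : q t j ^ 2 ≤ ∑ l, q t l ^ 2 :=
      Finset.single_le_sum (f := fun l => q t l ^ 2) (fun l _ => sq_nonneg _) (Finset.mem_univ j)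
    have habs : |q t i * q t j| ≤ ∑ l, q t l ^ 2 := by
      rw [abs_mul]
      nlinarith [sq_nonneg (|q t i| - |q t j|), sq_abs (q t i), sq_abs (q t j),
        abs_nonneg (q t i), abs_nonneg (q t j)]
    have : ‖f t * (q t i * q t j)‖ = |f t| * |q t i * q t j| := abs_mul _ _
    rw [this]
    calc |f t| * |q t i * q t j| ≤ 1 * (∑ l, q t l ^ 2) :=
          mul_le_mul (hb t) habs (abs_nonneg _)  zero_le_one
      _ = ∑ l, q t l ^ 2 := one_mul _

  -- indicator helpers
  have hind_meas : ∀ (y : ℝ) (k l : Fin (m + 1)), Measurable fun t =>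
      Set.indicator (Set.Iic y)
        (fun t => (if k = l then hfun k t else 0) - hfun k t * hfun l t) t :=
    fun y k l => (hc_meas k l).indicator measurableSet_Iic
  have hind_bdd : ∀ (y : ℝ) (k l : Fin (m + 1)) (t : ℝ),
      |Set.indicator (Set.Iic y)
        (fun t => (if k = l then hfun k t else 0) - hfun k t * hfun l t) t| ≤ 1 := by
    intro y k l t
    by_cases h : t ∈ Set.Iic y
    · rw [Set.indicator_of_mem h]; exact hc_bdd k l t
    · rw [Set.indicator_of_notMem h]; simp
  have hindq : ∀ (y : ℝ) (k l : Fin (m + 1)) (j : Fin d),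
      Set.indicator (Set.Iic y)
        (fun t => ((if k = l then hfun k t else 0) - hfun k t * hfun l t) * q t j)
      = fun t => Set.indicator (Set.Iic y)
          (fun t => (if k = l then hfun k t else 0) - hfun k t * hfun l t) t * q t j := by
    intro y k l j
    funext t
    by_cases h : t ∈ Set.Iic y
    · rw [Set.indicator_of_mem h, Set.indicator_of_mem h]
    · rw [Set.indicator_of_notMem h, Set.indicator_of_notMem h, zero_mul]
  -- restated hypotheses in pair form
  have hB' : ∀ (r' : Fin (m + 1)) (y : ℝ) (c : Fin m × Fin d), B r' y c =
      ∫ t in Set.Iic y,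
        ((if r' = c.1.succ then hfun r' t else 0) - hfun r' t * hfun c.1.succ t) * q t c.2 ∂Gbar := by
    intro r' y c
    obtain ⟨c1, c2⟩ := c
    exact hB r' y c1 c2
  have hW' : ∀ c c' : Fin m × Fin d, W c c' =
      ∫ t, ((if c.1.succ = c'.1.succ then hfun c.1.succ t else 0) -
        hfun c.1.succ t * hfun c'.1.succ t) * (q t c.2 * q t c'.2) ∂Gbar := by
    intro c c'
    obtain ⟨c1, c2⟩ := c
    obtain ⟨c1', c2'⟩ := c'
    rw [hW c1 c1' c2 c2']
    refine integral_congr_ae (Filter.Eventually.of_forall fun t => ?_)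
    simp only [Fin.succ_inj]
  -- symmetry facts
  have ha_symm : ∀ (r' s' : Fin (m + 1)) (y : ℝ), a r' s' y = a s' r' y := by
    intro r' s' y
    rw [ha r' s' y, ha s' r' y]
    exact integral_congr_ae (Filter.Eventually.of_forall fun t => hc_symm r' s' t)
  have hWsymm : W.transpose = W := by
    apply Matrix.ext; intro c c'
    obtain ⟨r', i⟩ := c; obtain ⟨s', j⟩ := c'
    rw [Matrix.transpose_apply, hW s' r' j i, hW r' s' i j]
    refine integral_congr_ae (Filter.Eventually.of_forall fun t => ?_)
    dsimp only
    have h1 : ((if s' = r' then hfun s'.succ t else 0) : ℝ)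
        = if r' = s' then hfun r'.succ t else 0 := by
      by_cases h : r' = s'
      · simp [h]
      · simp [h, Ne.symm h]
    rw [h1]; ring
  have hWinv_symm : ∀ cc dd : Fin m × Fin d, W⁻¹ cc dd = W⁻¹ dd cc := by
    intro cc dd
    have h : (W⁻¹).transpose = W⁻¹ := by rw [Matrix.transpose_nonsing_inv, hWsymm]
    calc W⁻¹ cc dd = (W⁻¹).transpose dd cc := (Matrix.transpose_apply _ _ _).symm
      _ = W⁻¹ dd cc := by rw [h]
  have hdotsymm : ∀ u v : Fin m × Fin d → ℝ,
      ∑ c, u c * (W⁻¹).mulVec v c = ∑ c, v c * (W⁻¹).mulVec u c := by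
    intro u v
    simp only [Matrix.mulVec, dotProduct, Finset.mul_sum]
    rw [Finset.sum_comm]
    refine Finset.sum_congr rfl fun c _ => Finset.sum_congr rfl fun c' _ => ?_
    rw [hWinv_symm c' c]; ring
  -- the core inequality
  have core : ∀ α : Fin N → ℝ, 0 ≤ ∑ i, ∑ j, α i * α j *
      ((ρ (r i) * ρ (r j))⁻¹ * (a (r i) (r j) (min (x i) (x j)) -
        ∑ c : Fin m × Fin d, B (r i) (x i) c * (W⁻¹).mulVec (B (r j) (x j)) c)) := by
    intro α
    set b : Fin m × Fin d → ℝ := fun c => ∑ i, α i * (ρ (r i))⁻¹ * B (r i) (x i) c with hbdef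
    set β : Fin m × Fin d → ℝ := (W⁻¹).mulVec b with hβdef
    set coef : Fin N ⊕ Fin m × Fin d → ℝ → ℝ :=
      Sum.elim (fun i t => α i * (ρ (r i))⁻¹ *
          Set.indicator (Set.Iic (x i)) (fun _ => (1 : ℝ)) t)
        (fun c t => -(β c * q t c.2)) with hcoefdef
    set idx : Fin N ⊕ Fin m × Fin d → Fin (m + 1) := Sum.elim r (fun c => c.1.succ) with hidxdef
    have coef_inl : ∀ (i : Fin N) (t : ℝ), coef (Sum.inl i) t
        = α i * (ρ (r i))⁻¹ * Set.indicator (Set.Iic (x i)) (fun _ => (1 : ℝ)) t :=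
      fun i t => rfl
    have coef_inr : ∀ (c : Fin m × Fin d) (t : ℝ), coef (Sum.inr c) t = -(β c * q t c.2) :=
      fun c t => rfl
    have idx_inl : ∀ i : Fin N, idx (Sum.inl i) = r i := fun i => rfl
    have idx_inr : ∀ c : Fin m × Fin d, idx (Sum.inr c) = c.1.succ := fun c => rfl
    have hE_nonneg : ∀ t : ℝ, 0 ≤ ∑ p : Fin N ⊕ Fin m × Fin d,
        ∑ p' : Fin N ⊕ Fin m × Fin d, coef p t * coef p' t *
          ((if idx p = idx p' then hfun (idx p) t else 0) - hfun (idx p) t * hfun (idx p') t) :=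
      fun t => drm_quad_nonneg (fun k => hfun k t) (fun k => hfun_nonneg k t) (hfun_sum t)
        idx (fun p => coef p t)
    -- case (inl, inl)
    have case11 : ∀ i j : Fin N, (fun t => coef (Sum.inl i) t * coef (Sum.inl j) t *
        ((if idx (Sum.inl i) = idx (Sum.inl j) then hfun (idx (Sum.inl i)) t else 0) -
          hfun (idx (Sum.inl i)) t * hfun (idx (Sum.inl j)) t))
        = fun t => (α i * (ρ (r i))⁻¹ * (α j * (ρ (r j))⁻¹)) *
            Set.indicator (Set.Iic (min (x i) (x j)))
              (fun t => (if r i = r j then hfun (r i) t else 0) - hfun (r i) t * hfun (r j) t) t := by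
      intro i j
      funext t
      rw [coef_inl, coef_inl, idx_inl, idx_inl]
      by_cases h1 : t ≤ x i <;> by_cases h2 : t ≤ x j <;>
        simp [Set.indicator_apply, Set.mem_Iic, le_min_iff, h1, h2] <;> ring
    have val11 : ∀ i j : Fin N, (∫ t, coef (Sum.inl i) t * coef (Sum.inl j) t *
        ((if idx (Sum.inl i) = idx (Sum.inl j) then hfun (idx (Sum.inl i)) t else 0) -
          hfun (idx (Sum.inl i)) t * hfun (idx (Sum.inl j)) t) ∂Gbar)
        = α i * α j * ((ρ (r i) * ρ (r j))⁻¹ * a (r i) (r j) (min (x i) (x j))) := by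
      intro i j
      rw [case11 i j, integral_const_mul, integral_indicator measurableSet_Iic,
        ← ha (r i) (r j) (min (x i) (x j)), mul_inv]
      ring
    -- case (inl, inr)
    have case12 : ∀ (i : Fin N) (c : Fin m × Fin d),
        (fun t => coef (Sum.inl i) t * coef (Sum.inr c) t *
        ((if idx (Sum.inl i) = idx (Sum.inr c) then hfun (idx (Sum.inl i)) t else 0) -
          hfun (idx (Sum.inl i)) t * hfun (idx (Sum.inr c)) t))
        = fun t => (-(α i * (ρ (r i))⁻¹ * β c)) *
            Set.indicator (Set.Iic (x i))
              (fun t => ((if r i = c.1.succ then hfun (r i) t else 0) -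
                hfun (r i) t * hfun c.1.succ t) * q t c.2) t := by
      intro i c
      funext t
      rw [coef_inl, coef_inr, idx_inl, idx_inr]
      by_cases h1 : t ≤ x i <;>
        simp [Set.indicator_apply, Set.mem_Iic, h1] <;> ring
    have val12 : ∀ (i : Fin N) (c : Fin m × Fin d),
        (∫ t, coef (Sum.inl i) t * coef (Sum.inr c) t *
        ((if idx (Sum.inl i) = idx (Sum.inr c) then hfun (idx (Sum.inl i)) t else 0) -
          hfun (idx (Sum.inl i)) t * hfun (idx (Sum.inr c)) t) ∂Gbar)
        = -(α i * (ρ (r i))⁻¹ * β c * B (r i) (x i) c) := by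
      intro i c
      rw [case12 i c, integral_const_mul, integral_indicator measurableSet_Iic,
        ← hB' (r i) (x i) c]
      ring
    -- case (inr, inl)
    have case21 : ∀ (c : Fin m × Fin d) (j : Fin N),
        (fun t => coef (Sum.inr c) t * coef (Sum.inl j) t *
        ((if idx (Sum.inr c) = idx (Sum.inl j) then hfun (idx (Sum.inr c)) t else 0) -
          hfun (idx (Sum.inr c)) t * hfun (idx (Sum.inl j)) t))
        = fun t => (-(α j * (ρ (r j))⁻¹ * β c)) *
            Set.indicator (Set.Iic (x j))
              (fun t => ((if r j = c.1.succ then hfun (r j) t else 0) -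
                hfun (r j) t * hfun c.1.succ t) * q t c.2) t := by
      intro c j
      funext t
      rw [coef_inl, coef_inr, idx_inl, idx_inr, hc_symm c.1.succ (r j) t]
      by_cases h1 : t ≤ x j <;>
        simp [Set.indicator_apply, Set.mem_Iic, h1] <;> ring
    have val21 : ∀ (c : Fin m × Fin d) (j : Fin N),
        (∫ t, coef (Sum.inr c) t * coef (Sum.inl j) t *
        ((if idx (Sum.inr c) = idx (Sum.inl j) then hfun (idx (Sum.inr c)) t else 0) -
          hfun (idx (Sum.inr c)) t * hfun (idx (Sum.inl j)) t) ∂Gbar)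
        = -(α j * (ρ (r j))⁻¹ * β c * B (r j) (x j) c) := by
      intro c j
      rw [case21 c j, integral_const_mul, integral_indicator measurableSet_Iic,
        ← hB' (r j) (x j) c]
      ring
    -- case (inr, inr)
    have case22 : ∀ c c' : Fin m × Fin d,
        (fun t => coef (Sum.inr c) t * coef (Sum.inr c') t *
        ((if idx (Sum.inr c) = idx (Sum.inr c') then hfun (idx (Sum.inr c)) t else 0) -
          hfun (idx (Sum.inr c)) t * hfun (idx (Sum.inr c')) t))
        = fun t => (β c * β c') * (((if c.1.succ = c'.1.succ then hfun c.1.succ t else 0) -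
            hfun c.1.succ t * hfun c'.1.succ t) * (q t c.2 * q t c'.2)) := by
      intro c c'
      funext t
      rw [coef_inr, coef_inr, idx_inr, idx_inr]
      ring
    have val22 : ∀ c c' : Fin m × Fin d,
        (∫ t, coef (Sum.inr c) t * coef (Sum.inr c') t *
        ((if idx (Sum.inr c) = idx (Sum.inr c') then hfun (idx (Sum.inr c)) t else 0) -
          hfun (idx (Sum.inr c)) t * hfun (idx (Sum.inr c')) t) ∂Gbar)
        = β c * β c' * W c c' := by
      intro c c'
      rw [case22 c c', integral_const_mul, ← hW' c c']
    -- integrability of all terms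
    have hint_all : ∀ p p' : Fin N ⊕ Fin m × Fin d,
        Integrable (fun t => coef p t * coef p' t *
          ((if idx p = idx p' then hfun (idx p) t else 0) -
            hfun (idx p) t * hfun (idx p') t)) Gbar := by
      intro p p'
      rcases p with i | c <;> rcases p' with j | c'
      · rw [case11 i j]
        exact (hint_bdd _ (hind_meas _ _ _) (hind_bdd _ _ _)).const_mul _
      · rw [case12 i c']
        refine Integrable.const_mul ?_ _
        rw [hindq]
        exact hint_q _ _ (hind_meas _ _ _) (hind_bdd _ _ _)
      · rw [case21 c j]
        refine Integrable.const_mul ?_ _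
        rw [hindq]
        exact hint_q _ _ (hind_meas _ _ _) (hind_bdd _ _ _)
      · rw [case22 c c']
        exact (hint_qq _ _ _ (hc_meas _ _) (hc_bdd _ _)).const_mul _
    -- swap integral and sums
    have hsplit : (∫ t, (∑ p : Fin N ⊕ Fin m × Fin d, ∑ p' : Fin N ⊕ Fin m × Fin d,
          coef p t * coef p' t *
          ((if idx p = idx p' then hfun (idx p) t else 0) -
            hfun (idx p) t * hfun (idx p') t)) ∂Gbar)
        = ∑ p : Fin N ⊕ Fin m × Fin d, ∑ p' : Fin N ⊕ Fin m × Fin d,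
            ∫ t, coef p t * coef p' t *
          ((if idx p = idx p' then hfun (idx p) t else 0) -
            hfun (idx p) t * hfun (idx p') t) ∂Gbar := by
      rw [integral_finset_sum _ fun p _ => integrable_finset_sum _ fun p' _ => hint_all p p']
      exact Finset.sum_congr rfl fun p _ => integral_finset_sum _ fun p' _ => hint_all p p'
    -- per-c collapsing of the B-blocks
    have hcollapse : ∀ (cc : Fin m × Fin d) (v : Fin N → ℝ),
        (∑ i, -(α i * (ρ (r i))⁻¹ * β cc * B (r i) (x i) cc)) = -(β cc * b cc) := by
      intro cc v
      simp only [hbdef, Finset.mul_sum, ← Finset.sum_neg_distrib]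
      exact Finset.sum_congr rfl fun i _ => by ring
    have hWb : W.mulVec β = b := by
      rw [hβdef, Matrix.mulVec_mulVec, Matrix.mul_nonsing_inv W hWinv, Matrix.one_mulVec]
    -- total value of the double sum
    have htotal : (∑ p : Fin N ⊕ Fin m × Fin d, ∑ p' : Fin N ⊕ Fin m × Fin d,
            ∫ t, coef p t * coef p' t *
          ((if idx p = idx p' then hfun (idx p) t else 0) -
            hfun (idx p) t * hfun (idx p') t) ∂Gbar)
        = (∑ i, ∑ j, α i * α j * ((ρ (r i) * ρ (r j))⁻¹ * a (r i) (r j) (min (x i) (x j))))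
          - ∑ c, β c * b c := by
      rw [Fintype.sum_sum_type]
      have inner1 : ∀ i : Fin N, (∑ p' : Fin N ⊕ Fin m × Fin d,
            ∫ t, coef (Sum.inl i) t * coef p' t *
          ((if idx (Sum.inl i) = idx p' then hfun (idx (Sum.inl i)) t else 0) -
            hfun (idx (Sum.inl i)) t * hfun (idx p') t) ∂Gbar)
          = (∑ j, α i * α j * ((ρ (r i) * ρ (r j))⁻¹ * a (r i) (r j) (min (x i) (x j))))
            + ∑ c, -(α i * (ρ (r i))⁻¹ * β c * B (r i) (x i) c) := by
        intro i
        rw [Fintype.sum_sum_type]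
        congr 1
        · exact Finset.sum_congr rfl fun j _ => val11 i j
        · exact Finset.sum_congr rfl fun c _ => val12 i c
      have inner2 : ∀ c : Fin m × Fin d, (∑ p' : Fin N ⊕ Fin m × Fin d,
            ∫ t, coef (Sum.inr c) t * coef p' t *
          ((if idx (Sum.inr c) = idx p' then hfun (idx (Sum.inr c)) t else 0) -
            hfun (idx (Sum.inr c)) t * hfun (idx p') t) ∂Gbar)
          = (∑ j, -(α j * (ρ (r j))⁻¹ * β c * B (r j) (x j) c))
            + ∑ c', β c * β c' * W c c' := by
        intro c
        rw [Fintype.sum_sum_type]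
        congr 1
        · exact Finset.sum_congr rfl fun j _ => val21 c j
        · exact Finset.sum_congr rfl fun c' _ => val22 c c'
      rw [Finset.sum_congr rfl fun i _ => inner1 i, Finset.sum_congr rfl fun c _ => inner2 c]
      rw [Finset.sum_add_distrib, Finset.sum_add_distrib]
      have hS12 : (∑ i, ∑ c, -(α i * (ρ (r i))⁻¹ * β c * B (r i) (x i) c))
          = -∑ c, β c * b c := by
        rw [Finset.sum_comm]
        rw [Finset.sum_congr rfl fun c _ => hcollapse c α]
        rw [Finset.sum_neg_distrib]
      have hS21 : (∑ c, ∑ j, -(α j * (ρ (r j))⁻¹ * β c * B (r j) (x j) c))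
          = -∑ c, β c * b c := by
        rw [Finset.sum_congr rfl fun c _ => hcollapse c α]
        rw [Finset.sum_neg_distrib]
      have hS22 : (∑ c, ∑ c', β c * β c' * W c c') = ∑ c, β c * b c := by
        refine Finset.sum_congr rfl fun c _ => ?_
        rw [← hWb]
        simp only [Matrix.mulVec, dotProduct, Finset.mul_sum]
        exact Finset.sum_congr rfl fun c' _ => by ring
      rw [hS12, hS21, hS22]
      ring
    -- identify the target quadratic form
    have hγ : ∀ cc : Fin m × Fin d,
        (∑ j, α j * (ρ (r j))⁻¹ * (W⁻¹).mulVec (B (r j) (x j)) cc) = β cc := by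
      intro cc
      simp only [hβdef, hbdef, Matrix.mulVec, dotProduct, Finset.mul_sum]
      rw [Finset.sum_comm]
      exact Finset.sum_congr rfl fun c' _ => Finset.sum_congr rfl fun j _ => by ring
    have hbc : ∀ cc : Fin m × Fin d,
        (∑ i, α i * (ρ (r i))⁻¹ * B (r i) (x i) cc) = b cc := by
      intro cc; simp only [hbdef]
    have hD : ∀ i j : Fin N,
        (∑ c, (α i * (ρ (r i))⁻¹ * B (r i) (x i) c) *
          (α j * (ρ (r j))⁻¹ * (W⁻¹).mulVec (B (r j) (x j)) c))
        = α i * α j * ((ρ (r i) * ρ (r j))⁻¹ *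
            ∑ c : Fin m × Fin d, B (r i) (x i) c * (W⁻¹).mulVec (B (r j) (x j)) c) := by
      intro i j
      rw [mul_inv, Finset.mul_sum, Finset.mul_sum]
      exact Finset.sum_congr rfl fun c _ => by ring
    have hsplit2 : ∀ i j : Fin N, α i * α j *
        ((ρ (r i) * ρ (r j))⁻¹ * (a (r i) (r j) (min (x i) (x j)) -
          ∑ c : Fin m × Fin d, B (r i) (x i) c * (W⁻¹).mulVec (B (r j) (x j)) c))
        = α i * α j * ((ρ (r i) * ρ (r j))⁻¹ * a (r i) (r j) (min (x i) (x j)))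
          - ∑ c, (α i * (ρ (r i))⁻¹ * B (r i) (x i) c) *
              (α j * (ρ (r j))⁻¹ * (W⁻¹).mulVec (B (r j) (x j)) c) := by
      intro i j
      rw [hD i j]
      ring
    have goal_eq : (∑ i, ∑ j, α i * α j *
        ((ρ (r i) * ρ (r j))⁻¹ * (a (r i) (r j) (min (x i) (x j)) -
          ∑ c : Fin m × Fin d, B (r i) (x i) c * (W⁻¹).mulVec (B (r j) (x j)) c)))
        = (∑ i, ∑ j, α i * α j * ((ρ (r i) * ρ (r j))⁻¹ * a (r i) (r j) (min (x i) (x j))))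
          - ∑ c, β c * b c := by
      rw [Finset.sum_congr rfl fun i _ => Finset.sum_congr rfl fun j _ => hsplit2 i j]
      rw [Finset.sum_congr rfl fun i (_ : i ∈ Finset.univ) => Finset.sum_sub_distrib _ _,
        Finset.sum_sub_distrib]
      congr 1
      rw [Finset.sum_congr rfl fun i (_ : i ∈ Finset.univ) => Finset.sum_comm,
        Finset.sum_comm]
      refine Finset.sum_congr rfl fun c _ => ?_
      rw [← Finset.sum_mul_sum, hγ c, hbc c, mul_comm (b c) (β c)]
    calc (0 : ℝ) ≤ ∫ t, (∑ p : Fin N ⊕ Fin m × Fin d, ∑ p' : Fin N ⊕ Fin m × Fin d,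
          coef p t * coef p' t *
          ((if idx p = idx p' then hfun (idx p) t else 0) -
            hfun (idx p) t * hfun (idx p') t)) ∂Gbar :=
          integral_nonneg fun t => hE_nonneg t
      _ = ∑ p : Fin N ⊕ Fin m × Fin d, ∑ p' : Fin N ⊕ Fin m × Fin d,
            ∫ t, coef p t * coef p' t *
          ((if idx p = idx p' then hfun (idx p) t else 0) -
            hfun (idx p) t * hfun (idx p') t) ∂Gbar := hsplit
      _ = (∑ i, ∑ j, α i * α j * ((ρ (r i) * ρ (r j))⁻¹ * a (r i) (r j) (min (x i) (x j))))
          - ∑ c, β c * b c := htotal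
      _ = ∑ i, ∑ j, α i * α j *
          ((ρ (r i) * ρ (r j))⁻¹ * (a (r i) (r j) (min (x i) (x j)) -
            ∑ c : Fin m × Fin d, B (r i) (x i) c * (W⁻¹).mulVec (B (r j) (x j)) c)) :=
          goal_eq.symm
  constructor
  · apply Matrix.ext
    intro i j
    rw [Matrix.conjTranspose_apply]
    simp only [Matrix.of_apply, star_trivial]
    rw [ha_symm (r j) (r i), min_comm (x j) (x i),
      hdotsymm (B (r j) (x j)) (B (r i) (x i)), mul_comm (ρ (r j)) (ρ (r i))]
  · intro α
    refine (core α).trans_eq ?_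
    rw [Finsupp.sum_fintype _ _ (fun i => by simp)]
    refine Finset.sum_congr rfl fun i _ => ?_
    rw [Finsupp.sum_fintype _ _ (fun j => by simp)]
    refine Finset.sum_congr rfl fun j _ => ?_
    simp only [Matrix.of_apply, star_trivial]; ring
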